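/- arXiv:2306.03117 — 2 statements merged into one kernel-verified Lean document; each statement's English description precedes it below -/
import Mathlib

section
/- (Theorem 2, score rescaling, general linear-Gaussian form) Let μ₀, b ∈ ℝ^d, let A be a d×d real matrix, let Σ₀ and Σ_t be symmetric positive definite d×d real matrices, and let β > 0. Define p_t(x) = N(x; A μ₀ + b, Σ_t + A Σ₀ Aᵀ) (the marginal of the perturbation kernel N(A x₀ + b, Σ_t) applied to the data distribution N(μ₀, Σ₀)) and p_t^{(β)}(x) = N(x; A μ₀ + b, Σ_t + β⁻¹ A Σ₀ Aᵀ) (the marginal obtained from the β-tempered data distribution N(μ₀, β⁻¹ Σ₀)). Then for every x ∈ ℝ^d, ∇_x log p_t^{(β)}(x) = R ∇_x log p_t(x), where R = (Σ_t + β⁻¹ A Σ₀ Aᵀ)⁻¹ (Σ_t + A Σ₀ Aᵀ). -/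
open scoped RealInnerProductSpace Matrix

/-- The multivariate Gaussian density `N(x; μ, S)` on `ℝ^d`. -/
noncomputable def gaussianDensity {d : ℕ} (μ : EuclideanSpace ℝ (Fin d))
    (S : Matrix (Fin d) (Fin d) ℝ) (x : EuclideanSpace ℝ (Fin d)) : ℝ :=
  (2 * Real.pi) ^ (-(d : ℝ) / 2) * S.det ^ (-(1 : ℝ) / 2) *
    Real.exp (-(1 / 2 : ℝ) * ⟪x - μ, (Matrix.toEuclideanLin S⁻¹) (x - μ)⟫)

lemma grad_log_gauss {d : ℕ} (μ : EuclideanSpace ℝ (Fin d))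
    (S : Matrix (Fin d) (Fin d) ℝ) (hS : S.PosDef) (x : EuclideanSpace ℝ (Fin d)) :
    gradient (fun y => Real.log (gaussianDensity μ S y)) x
      = -((Matrix.toEuclideanLin S⁻¹) (x - μ)) := by
  set c : ℝ := (2 * Real.pi) ^ (-(d : ℝ) / 2) * S.det ^ (-(1 : ℝ) / 2) with hc
  have hcpos : 0 < c := by
    apply mul_pos
    · exact Real.rpow_pos_of_pos (by positivity) _
    · exact Real.rpow_pos_of_pos hS.det_pos _
  set L : EuclideanSpace ℝ (Fin d) →L[ℝ] EuclideanSpace ℝ (Fin d) :=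
    LinearMap.toContinuousLinearMap (Matrix.toEuclideanLin S⁻¹) with hL
  have hLsymm : ∀ u v : EuclideanSpace ℝ (Fin d), ⟪L u, v⟫ = ⟪u, L v⟫ := by
    have hH : (S⁻¹).IsHermitian := by
      have := hS.isHermitian
      exact this.inv
    exact fun u v => (Matrix.isHermitian_iff_isSymmetric.mp hH) u v
  have hfun : (fun y => Real.log (gaussianDensity μ S y))
      = fun y => Real.log c + (-(1 / 2 : ℝ)) * ⟪y - μ, L (y - μ)⟫ := by
    funext y
    rw [gaussianDensity, Real.log_mul (ne_of_gt hcpos) (Real.exp_ne_zero _), Real.log_exp]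
    rfl
  rw [hfun]
  have hgrad : HasGradientAt
      (fun y => Real.log c + (-(1 / 2 : ℝ)) * ⟪y - μ, L (y - μ)⟫)
      (-(L (x - μ))) x := by
    rw [hasGradientAt_iff_hasFDerivAt]
    have hsub : HasFDerivAt (fun y : EuclideanSpace ℝ (Fin d) => y - μ)
        (ContinuousLinearMap.id ℝ _) x := (hasFDerivAt_id x).sub_const μ
    have hLy : HasFDerivAt (fun y : EuclideanSpace ℝ (Fin d) => L (y - μ)) L x := by
      exact L.hasFDerivAt.comp x hsub
    have hinner := (hsub.inner ℝ hLy)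
    have hfd := hinner.const_mul (-(1 / 2 : ℝ)) |>.const_add (Real.log c)
    refine hfd.congr_fderiv ?_
    symm
    ext h
    simp only [ContinuousLinearMap.coe_comp', Function.comp_apply,
      ContinuousLinearMap.smul_apply, ContinuousLinearMap.prod_apply,
      ContinuousLinearMap.coe_id', id_eq, fderivInnerCLM_apply, smul_eq_mul]
    rw [InnerProductSpace.toDual_apply_apply, ← hLsymm (x - μ) h,
      real_inner_comm h (L (x - μ)), inner_neg_left]
    ring_nf
    rw [real_inner_comm]
  exact hgrad.gradient

lemma posSemidef_smul {d : ℕ} {M : Matrix (Fin d) (Fin d) ℝ} (hM : M.PosSemidef)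
    {c : ℝ} (hc : 0 ≤ c) : (c • M).PosSemidef := by
  refine ⟨?_, fun x => ?_⟩
  · unfold Matrix.IsHermitian
    rw [Matrix.conjTranspose_smul, hM.isHermitian.eq]
    simp
  · exact (hM.smul hc).2 x

/-- Theorem 2 (score rescaling, general linear-Gaussian form): with
`p_t = N(A μ₀ + b, Σ_t + A Σ₀ Aᵀ)` and `p_t^{(β)} = N(A μ₀ + b, Σ_t + β⁻¹ A Σ₀ Aᵀ)`,
the tempered score is a linear rescaling of the untempered score:
`∇ log p_t^{(β)}(x) = R ∇ log p_t(x)` with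
`R = (Σ_t + β⁻¹ A Σ₀ Aᵀ)⁻¹ (Σ_t + A Σ₀ Aᵀ)`. -/
theorem score_rescaling {d : ℕ} (μ₀ b : EuclideanSpace ℝ (Fin d))
    (A : Matrix (Fin d) (Fin d) ℝ) (S₀ St : Matrix (Fin d) (Fin d) ℝ)
    (hS₀ : S₀.PosDef) (hSt : St.PosDef) (β : ℝ) (hβ : 0 < β) :
    ∀ x : EuclideanSpace ℝ (Fin d),
      gradient (fun y =>
          Real.log (gaussianDensity ((Matrix.toEuclideanLin A) μ₀ + b)
            (St + β⁻¹ • (A * S₀ * Aᵀ)) y)) x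
        = (Matrix.toEuclideanLin ((St + β⁻¹ • (A * S₀ * Aᵀ))⁻¹ * (St + A * S₀ * Aᵀ)))
            (gradient (fun y =>
              Real.log (gaussianDensity ((Matrix.toEuclideanLin A) μ₀ + b)
                (St + A * S₀ * Aᵀ) y)) x) := by
  intro x
  have hASA : (A * S₀ * Aᵀ).PosSemidef := by
    have := hS₀.posSemidef.mul_mul_conjTranspose_same A
    rwa [Matrix.conjTranspose_eq_transpose_of_trivial] at this
  have hM₁ : (St + A * S₀ * Aᵀ).PosDef := hSt.add_posSemidef hASA
  have hM₂ : (St + β⁻¹ • (A * S₀ * Aᵀ)).PosDef :=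
    hSt.add_posSemidef (posSemidef_smul hASA (le_of_lt (inv_pos.mpr hβ)))
  rw [grad_log_gauss _ _ hM₂, grad_log_gauss _ _ hM₁, map_neg]
  have hcomp : ∀ (P Q : Matrix (Fin d) (Fin d) ℝ) (v : EuclideanSpace ℝ (Fin d)),
      Matrix.toEuclideanLin (P * Q) v = Matrix.toEuclideanLin P (Matrix.toEuclideanLin Q v) := by
    intro P Q v
    simp [Matrix.toEuclideanLin_apply, Matrix.mulVec_mulVec]
  have key : (St + β⁻¹ • (A * S₀ * Aᵀ))⁻¹ * (St + A * S₀ * Aᵀ) * (St + A * S₀ * Aᵀ)⁻¹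
      = (St + β⁻¹ • (A * S₀ * Aᵀ))⁻¹ := by
    rw [mul_assoc, Matrix.mul_nonsing_inv _ (isUnit_iff_ne_zero.mpr hM₁.det_pos.ne'), mul_one]
  rw [← hcomp, key]
end

section
/- (VE score rescaling) Let μ₀ ∈ ℝ^d, let Σ₀ be a symmetric positive definite d×d real matrix, let s > 0 (representing σ²(t) - σ²(0)), and let β > 0. Define p(x) = N(x; μ₀, Σ₀ + s I) and p^{(β)}(x) = N(x; μ₀, β⁻¹ Σ₀ + s I). Then for every x ∈ ℝ^d, ∇_x log p^{(β)}(x) = R^{VE} ∇_x log p(x), where R^{VE} = (s I + β⁻¹ Σ₀)⁻¹ (s I + Σ₀). -/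
open scoped RealInnerProductSpace Matrix

lemma posDef_smul' {d : ℕ} {A : Matrix (Fin d) (Fin d) ℝ} (hA : A.PosDef)
    {c : ℝ} (hc : 0 < c) : (c • A).PosDef := by
  refine ⟨?_, fun x hx => ?_⟩
  · unfold Matrix.IsHermitian
    rw [Matrix.conjTranspose_smul, hA.1]
    simp
  · have h := hA.2 hx
    exact (hA.smul hc).2 hx

lemma toEuclideanLin_mul_apply {d : ℕ} (M N : Matrix (Fin d) (Fin d) ℝ)
    (v : EuclideanSpace ℝ (Fin d)) :
    Matrix.toEuclideanLin (M * N) v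
      = Matrix.toEuclideanLin M (Matrix.toEuclideanLin N v) := by
  simp only [Matrix.toEuclideanLin_eq_toLin]
  rw [Matrix.toLin_mul _ (PiLp.basisFun 2 ℝ (Fin d)) _]
  rfl

lemma gradient_log_gaussianDensity {d : ℕ} (μ : EuclideanSpace ℝ (Fin d))
    (A : Matrix (Fin d) (Fin d) ℝ) (hA : A.PosDef) (x : EuclideanSpace ℝ (Fin d)) :
    gradient (fun y => Real.log (gaussianDensity μ A y)) x
      = -(Matrix.toEuclideanLin A⁻¹ (x - μ)) := by
  classical
  set c : ℝ := (2 * Real.pi) ^ (-(d : ℝ) / 2) * A.det ^ (-(1 : ℝ) / 2) with hc_def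
  have hc : 0 < c := by
    apply mul_pos
    · exact Real.rpow_pos_of_pos (by positivity) _
    · exact Real.rpow_pos_of_pos hA.det_pos _
  set M : EuclideanSpace ℝ (Fin d) →L[ℝ] EuclideanSpace ℝ (Fin d) := (Matrix.toEuclideanLin A⁻¹).toContinuousLinearMap with hM_def
  have hMapp : ∀ v : EuclideanSpace ℝ (Fin d), M v = Matrix.toEuclideanLin A⁻¹ v := fun v => rfl
  have hfun : (fun y => Real.log (gaussianDensity μ A y))
      = fun y => Real.log c + (-(1 / 2 : ℝ) * ⟪y - μ, M (y - μ)⟫) := by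
    funext y
    rw [gaussianDensity, ← hc_def, Real.log_mul hc.ne' (Real.exp_ne_zero _),
      Real.log_exp, hMapp]
  rw [hfun]
  have hsymm : ∀ u v : EuclideanSpace ℝ (Fin d), ⟪M u, v⟫ = ⟪u, M v⟫ := by
    have h := Matrix.isHermitian_iff_isSymmetric.1 hA.inv.isHermitian
    intro u v; exact h u v
  have h1 : HasFDerivAt (fun y : EuclideanSpace ℝ (Fin d) => y - μ) (ContinuousLinearMap.id ℝ (EuclideanSpace ℝ (Fin d))) x :=
    (hasFDerivAt_id x).sub_const μ
  have h2 : HasFDerivAt (fun y : EuclideanSpace ℝ (Fin d) => M (y - μ))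
      (M.comp (ContinuousLinearMap.id ℝ (EuclideanSpace ℝ (Fin d)))) x :=
    M.hasFDerivAt.comp x h1
  have h3 := h1.inner ℝ h2
  have h4 := h3.const_mul (-(1 / 2 : ℝ))
  have h5 := h4.const_add (Real.log c)
  have h6 : HasGradientAt
      (fun y : EuclideanSpace ℝ (Fin d) => Real.log c + (-(1 / 2 : ℝ) * ⟪y - μ, M (y - μ)⟫))
      (-(M (x - μ))) x := by
    rw [hasGradientAt_iff_hasFDerivAt]
    refine h5.congr_fderiv ?_
    symm
    ext h
    simp only [InnerProductSpace.toDual_apply_apply, ContinuousLinearMap.coe_comp',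
      Function.comp_apply, ContinuousLinearMap.coe_smul', Pi.smul_apply,
      ContinuousLinearMap.prod_apply, ContinuousLinearMap.coe_id', id_eq,
      fderivInnerCLM_apply, smul_eq_mul]
    have e1 : ⟪x - μ, M h⟫ = ⟪M (x - μ), h⟫ := (hsymm (x - μ) h).symm
    have e2 : ⟪h, M (x - μ)⟫ = ⟪M (x - μ), h⟫ := real_inner_comm _ _
    rw [inner_neg_left, e1, e2]
    ring
  rw [h6.gradient, hMapp]

/-- VE score rescaling: with `p = N(μ₀, Σ₀ + s I)` and
`p^{(β)} = N(μ₀, β⁻¹ Σ₀ + s I)`, for every `x`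
`∇ log p^{(β)}(x) = R^{VE} ∇ log p(x)` where
`R^{VE} = (s I + β⁻¹ Σ₀)⁻¹ (s I + Σ₀)`. -/
theorem ve_score_rescaling {d : ℕ} (μ₀ : EuclideanSpace ℝ (Fin d))
    (S₀ : Matrix (Fin d) (Fin d) ℝ) (hS₀ : S₀.PosDef)
    (s : ℝ) (hs : 0 < s) (β : ℝ) (hβ : 0 < β) :
    ∀ x : EuclideanSpace ℝ (Fin d),
      gradient (fun y =>
          Real.log (gaussianDensity μ₀
            (β⁻¹ • S₀ + s • (1 : Matrix (Fin d) (Fin d) ℝ)) y)) x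
        = (Matrix.toEuclideanLin
            ((s • (1 : Matrix (Fin d) (Fin d) ℝ) + β⁻¹ • S₀)⁻¹ *
              (s • (1 : Matrix (Fin d) (Fin d) ℝ) + S₀)))
            (gradient (fun y =>
              Real.log (gaussianDensity μ₀
                (S₀ + s • (1 : Matrix (Fin d) (Fin d) ℝ)) y)) x) := by
  intro x
  have hone : (1 : Matrix (Fin d) (Fin d) ℝ).PosDef := Matrix.PosDef.one
  have hsI : (s • (1 : Matrix (Fin d) (Fin d) ℝ)).PosDef := posDef_smul' hone hs
  have hβS : (β⁻¹ • S₀).PosDef := posDef_smul' hS₀ (inv_pos.mpr hβ)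
  have hB : (β⁻¹ • S₀ + s • (1 : Matrix (Fin d) (Fin d) ℝ)).PosDef := hβS.add hsI
  have hC : (S₀ + s • (1 : Matrix (Fin d) (Fin d) ℝ)).PosDef := hS₀.add hsI
  rw [gradient_log_gaussianDensity _ _ hB, gradient_log_gaussianDensity _ _ hC,
    map_neg, ← toEuclideanLin_mul_apply]
  have hmat : (s • (1 : Matrix (Fin d) (Fin d) ℝ) + β⁻¹ • S₀)⁻¹ *
      (s • (1 : Matrix (Fin d) (Fin d) ℝ) + S₀) *
      (S₀ + s • (1 : Matrix (Fin d) (Fin d) ℝ))⁻¹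
      = (β⁻¹ • S₀ + s • (1 : Matrix (Fin d) (Fin d) ℝ))⁻¹ := by
    rw [add_comm (s • (1 : Matrix (Fin d) (Fin d) ℝ)) S₀, mul_assoc,
      Matrix.mul_nonsing_inv _ (Matrix.isUnit_iff_isUnit_det _ |>.1 hC.isUnit),
      mul_one, add_comm (s • (1 : Matrix (Fin d) (Fin d) ℝ)) (β⁻¹ • S₀)]
  rw [hmat]
end
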